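/- Let k ≥ 2 and let S = S_{I_k} be the combinatorial Rees matrix semigroup whose structure matrix is the k×k identity matrix. A polynomial p over S is identically 0 if and only if some connected component of the bipartite graph B(p) is not consistent, i.e., contains vertices i_A and j_B arising from constants with i ≠ j. -/

import Mathlib

/-- Multiplication in the combinatorial Rees matrix semigroup `S_{I_k}` whose
structure matrix is the `k×k` identity matrix (zero modeled as `none`). -/
def cmulI (k : ℕ) : Option (Fin k × Fin k) → Option (Fin k × Fin k) →
    Option (Fin k × Fin k)
  | some (i, l), some (j, c) => if l = j then some (i, c) else none
  | _, _ => none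

/-- Product of a nonempty list. -/
def prodWith {α : Type} (f : α → α → α) : List α → Option α
  | [] => none
  | a :: t => some (t.foldl f a)

/-- `a`, `b` occur as a consecutive pair in the word `w`. -/
def consec {α : Type} (w : List α) (a b : α) : Prop :=
  ∃ l₁ l₂ : List α, w = l₁ ++ a :: b :: l₂

/-- First part of the bi-expression of a letter (a variable `v` gives `v₁`; a
constant `[i,λ]` gives the index `i`). -/
def fstV {V : Type} {k : ℕ} : (V ⊕ (Fin k × Fin k)) → V ⊕ Fin k :=
  Sum.map id Prod.fst

/-- Second part of the bi-expression of a letter. -/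
def sndV {V : Type} {k : ℕ} : (V ⊕ (Fin k × Fin k)) → V ⊕ Fin k :=
  Sum.map id Prod.snd

/-- Edges of the bipartite graph `B(p)`: the left summand is the side `X` of first
parts, the right summand the side `Y` of second parts; each consecutive pair of
letters `x y` contributes the (undirected) edge between `(sndV x) ∈ Y` and
`(fstV y) ∈ X`. -/
def edgeB {V : Type} {k : ℕ} (w : List (V ⊕ (Fin k × Fin k))) :
    ((V ⊕ Fin k) ⊕ (V ⊕ Fin k)) → ((V ⊕ Fin k) ⊕ (V ⊕ Fin k)) → Prop :=
  fun a b =>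
    ∃ x y, consec w x y ∧
      ((a = Sum.inr (sndV x) ∧ b = Sum.inl (fstV y)) ∨
       (b = Sum.inr (sndV x) ∧ a = Sum.inl (fstV y)))

/-- Two vertices lie in the same connected component of `B(p)`. -/
def reachB {V : Type} {k : ℕ} (w : List (V ⊕ (Fin k × Fin k))) :
    ((V ⊕ Fin k) ⊕ (V ⊕ Fin k)) → ((V ⊕ Fin k) ⊕ (V ⊕ Fin k)) → Prop :=
  Relation.ReflTransGen (edgeB w)

/-- The index carried by a constant-vertex (`none` for variable-vertices). -/
def constVal {V : Type} {k : ℕ} :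
    ((V ⊕ Fin k) ⊕ (V ⊕ Fin k)) → Option (Fin k)
  | Sum.inl (Sum.inr i) => some i
  | Sum.inr (Sum.inr i) => some i
  | _ => none


theorem List.chain'_cons {α : Type _} {R : α → α → Prop} {a b : α} {l : List α} :
    List.Chain' R (a :: b :: l) ↔ R a b ∧ List.Chain' R (b :: l) := List.isChain_cons_cons

theorem List.chain'_singleton {α : Type _} {R : α → α → Prop} (a : α) :
    List.Chain' R [a] := List.isChain_singleton a

theorem List.chain'_nil {α : Type _} {R : α → α → Prop} : List.Chain' R [] := List.isChain_nil

section Aux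
variable {k : ℕ} {V : Type}

/-- matching relation between evaluated letters -/
def Mrel (k : ℕ) (a b : Option (Fin k × Fin k)) : Prop :=
  ∃ i l c, a = some (i, l) ∧ b = some (l, c)

lemma cmulI_none_left (b : Option (Fin k × Fin k)) : cmulI k none b = none := by
  rcases b with _ | ⟨j, c⟩ <;> rfl

lemma foldl_cmulI_none : ∀ L : List (Option (Fin k × Fin k)),
    L.foldl (cmulI k) none = none
  | [] => rfl
  | b :: L => by rw [List.foldl_cons, cmulI_none_left]; exact foldl_cmulI_none L

lemma cmulI_eq_some {a b : Option (Fin k × Fin k)} {w : Fin k × Fin k}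
    (h : cmulI k a b = some w) :
    ∃ i l c, a = some (i, l) ∧ b = some (l, c) ∧ w = (i, c) := by
  rcases a with _ | ⟨i, l⟩
  · rw [cmulI_none_left] at h; exact absurd h (by simp)
  rcases b with _ | ⟨j, c⟩
  · exact absurd h (by simp [cmulI])
  by_cases hlj : l = j
  · subst hlj
    have heq : cmulI k (some (i, l)) (some (l, c)) = some (i, c) := by
      simp [cmulI]
    rw [heq] at h
    injection h with h
    exact ⟨i, l, c, rfl, rfl, h.symm⟩
  · have heq : cmulI k (some (i, l)) (some (j, c)) = none := by
      simp [cmulI, hlj]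
    rw [heq] at h
    exact absurd h (by simp)

lemma Mrel_snd {l : List (Option (Fin k × Fin k))} {i j c : Fin k}
    (h : List.Chain' (Mrel k) (some (i, c) :: l)) :
    List.Chain' (Mrel k) (some (j, c) :: l) := by
  rcases l with _ | ⟨d, l⟩
  · exact List.chain'_singleton _
  · rw [List.chain'_cons] at h ⊢
    obtain ⟨⟨i', l', c', h1, h2⟩, h3⟩ := h
    injection h1 with h1
    have hl : c = l' := congrArg Prod.snd h1
    exact ⟨⟨j, c, c', rfl, by rw [hl]; exact h2⟩, h3⟩

lemma foldl_chain : ∀ (L : List (Option (Fin k × Fin k)))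
    (a : Option (Fin k × Fin k)) (z : Fin k × Fin k),
    L.foldl (cmulI k) a = some z → List.Chain' (Mrel k) (a :: L)
  | [], a, z, _ => List.chain'_singleton _
  | b :: L, a, z, h => by
    rw [List.foldl_cons] at h
    rcases hab : cmulI k a b with _ | w
    · rw [hab, foldl_cmulI_none] at h; exact absurd h (by simp)
    · obtain ⟨i, l, c, rfl, rfl, rfl⟩ := cmulI_eq_some hab
      have ih := foldl_chain L _ z (hab ▸ h)
      rw [List.chain'_cons]
      exact ⟨⟨i, l, c, rfl, rfl⟩, Mrel_snd ih⟩

lemma chain_foldl : ∀ (L : List (Option (Fin k × Fin k))) (i l : Fin k),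
    List.Chain' (Mrel k) (some (i, l) :: L) →
    ∃ z, L.foldl (cmulI k) (some (i, l)) = some z
  | [], i, l, _ => ⟨(i, l), rfl⟩
  | b :: L, i, l, h => by
    rw [List.chain'_cons] at h
    obtain ⟨⟨i', l', c', h1, rfl⟩, h3⟩ := h
    injection h1 with h1
    have hl : l = l' := congrArg Prod.snd h1
    have hmul : cmulI k (some (i, l)) (some (l', c')) = some (i, c') := by
      rw [← hl]; simp [cmulI]
    rw [List.foldl_cons, hmul]
    exact chain_foldl L i c' (Mrel_snd h3)

lemma chain'_middle {β : Type} {R : β → β → Prop} :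
    ∀ (m : List β) {a b : β} {l : List β},
      List.Chain' R (m ++ a :: b :: l) → R a b
  | [], a, b, l, h => (List.chain'_cons.mp h).1
  | c :: m, a, b, l, h => chain'_middle m h.tail

lemma chain'_of_consec {α β : Type} {R : β → β → Prop} {f : α → β} :
    ∀ {w : List α}, (∀ x y, consec w x y → R (f x) (f y)) →
      List.Chain' R (w.map f)
  | [], _ => List.chain'_nil
  | [a], _ => List.chain'_singleton _
  | a :: b :: t, h => by
    rw [List.map_cons, List.map_cons, List.chain'_cons]
    refine ⟨h a b ⟨[], t, rfl⟩, ?_⟩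
    rw [← List.map_cons]
    exact chain'_of_consec (fun x y ⟨l₁, l₂, hw⟩ => h x y ⟨a :: l₁, l₂, by rw [hw]; rfl⟩)

lemma consec_of_chain' {α β : Type} {R : β → β → Prop} {f : α → β} {w : List α}
    (h : List.Chain' R (w.map f)) {x y : α} (hc : consec w x y) : R (f x) (f y) := by
  obtain ⟨l₁, l₂, rfl⟩ := hc
  rw [List.map_append, List.map_cons, List.map_cons] at h
  exact chain'_middle _ h

lemma reach_symm {w : List (V ⊕ (Fin k × Fin k))}
    {a b : (V ⊕ Fin k) ⊕ (V ⊕ Fin k)} (h : reachB w a b) : reachB w b a := by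
  refine (@Relation.ReflTransGen.stdSymm _ _ ⟨?_⟩).symm _ _ h
  rintro u v ⟨x, y, hc, hor⟩
  exact ⟨x, y, hc, hor.symm⟩

end Aux

open Classical in
noncomputable def cval {V : Type} {k : ℕ} (hk0 : 0 < k)
    (w : List (V ⊕ (Fin k × Fin k))) (u : (V ⊕ Fin k) ⊕ (V ⊕ Fin k)) : Fin k :=
  if h : ∃ r : Fin k, ∃ x, reachB w u x ∧ constVal x = some r then h.choose
  else ⟨0, hk0⟩

lemma cval_const {V : Type} {k : ℕ} (hk0 : 0 < k)
    {w : List (V ⊕ (Fin k × Fin k))}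
    (hcons : ∀ a b (i j : Fin k), constVal a = some i → constVal b = some j →
      reachB w a b → i = j)
    {u x : (V ⊕ Fin k) ⊕ (V ⊕ Fin k)} {i : Fin k}
    (hr : reachB w u x) (hx : constVal x = some i) : cval hk0 w u = i := by
  classical
  have h : ∃ r : Fin k, ∃ x, reachB w u x ∧ constVal x = some r := ⟨i, x, hr, hx⟩
  rw [cval, dif_pos h]
  obtain ⟨x', hr', hx'⟩ := h.choose_spec
  exact (hcons x x' i h.choose hx hx' ((reach_symm hr).trans hr')).symm

lemma cval_reach {V : Type} {k : ℕ} (hk0 : 0 < k)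
    {w : List (V ⊕ (Fin k × Fin k))}
    (hcons : ∀ a b (i j : Fin k), constVal a = some i → constVal b = some j →
      reachB w a b → i = j)
    {u v : (V ⊕ Fin k) ⊕ (V ⊕ Fin k)}
    (hr : reachB w u v) : cval hk0 w u = cval hk0 w v := by
  classical
  unfold cval
  split_ifs with h1 h2 h2
  · obtain ⟨x1, hr1, hx1⟩ := h1.choose_spec
    obtain ⟨x2, hr2, hx2⟩ := h2.choose_spec
    exact hcons x1 x2 _ _ hx1 hx2 ((reach_symm hr1).trans (hr.trans hr2))
  · obtain ⟨r, x, hux, hc⟩ := h1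
    exact absurd ⟨r, x, (reach_symm hr).trans hux, hc⟩ h2
  · obtain ⟨r, x, hvx, hc⟩ := h2
    exact absurd ⟨r, x, hr.trans hvx, hc⟩ h1
  · rfl

/-- The labelling of vertices induced by an evaluation. -/
def phiV {V : Type} {k : ℕ} (e : V → Option (Fin k × Fin k)) :
    ((V ⊕ Fin k) ⊕ (V ⊕ Fin k)) → Option (Fin k)
  | Sum.inl (Sum.inl v) => (e v).map Prod.fst
  | Sum.inl (Sum.inr r) => some r
  | Sum.inr (Sum.inl v) => (e v).map Prod.snd
  | Sum.inr (Sum.inr r) => some r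
/-- For `k ≥ 2`, a polynomial `p` over `S_{I_k}` (a nonempty word in variables and
nonzero constants) is identically 0 iff some connected component of `B(p)` is not
consistent, i.e. contains constant-vertices with distinct indices. -/

theorem stmt15 (k : ℕ) (hk : 2 ≤ k) (V : Type)
    (p : List (V ⊕ (Fin k × Fin k))) (hp : p ≠ []) :
    (∀ e : V → Option (Fin k × Fin k),
        prodWith (cmulI k)
          (p.map (Sum.elim e (fun c => some c))) = some none) ↔
    ∃ (a b : (V ⊕ Fin k) ⊕ (V ⊕ Fin k)) (i j : Fin k), i ≠ j ∧
      constVal a = some i ∧ constVal b = some j ∧ reachB p a b := by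
  classical
  have hk0 : 0 < k := by omega
  obtain ⟨t, rest, rfl⟩ : ∃ t rest, p = t :: rest := by
    cases p with
    | nil => exact absurd rfl hp
    | cons a l => exact ⟨a, l, rfl⟩
  constructor
  · -- identically zero → inconsistent component
    intro hL
    by_contra hR
    have hcons : ∀ a b (i j : Fin k), constVal a = some i → constVal b = some j →
        reachB (t :: rest) a b → i = j := by
      intro a b i j ha hb hr
      by_contra hne
      exact hR ⟨a, b, i, j, hne, ha, hb, hr⟩
    have val_eq : ∀ x, Sum.elim (fun v => some (cval hk0 (t :: rest) (Sum.inl (Sum.inl v)),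
          cval hk0 (t :: rest) (Sum.inr (Sum.inl v)))) (fun c => (some c : Option (Fin k × Fin k))) x =
        some (cval hk0 (t :: rest) (Sum.inl (fstV x)),
              cval hk0 (t :: rest) (Sum.inr (sndV x))) := by
      rintro (v | ⟨i, l⟩)
      · rfl
      · have h1 : cval hk0 (t :: rest) (Sum.inl (Sum.inr i)) = i :=
          cval_const hk0 hcons Relation.ReflTransGen.refl rfl
        have h2 : cval hk0 (t :: rest) (Sum.inr (Sum.inr l)) = l :=
          cval_const hk0 hcons Relation.ReflTransGen.refl rfl
        show some (i, l) = some (cval hk0 (t :: rest) (Sum.inl (Sum.inr i)),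
          cval hk0 (t :: rest) (Sum.inr (Sum.inr l)))
        rw [h1, h2]
    set e : V → Option (Fin k × Fin k) := fun v =>
      some (cval hk0 (t :: rest) (Sum.inl (Sum.inl v)),
            cval hk0 (t :: rest) (Sum.inr (Sum.inl v))) with he
    have hchain : List.Chain' (Mrel k)
        ((t :: rest).map (Sum.elim e (fun c => some c))) := by
      refine chain'_of_consec ?_
      intro x y hc
      have hedge : edgeB (t :: rest) (Sum.inr (sndV x)) (Sum.inl (fstV y)) :=
        ⟨x, y, hc, Or.inl ⟨rfl, rfl⟩⟩
      have hcv : cval hk0 (t :: rest) (Sum.inl (fstV y)) =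
          cval hk0 (t :: rest) (Sum.inr (sndV x)) :=
        cval_reach hk0 hcons (reach_symm (Relation.ReflTransGen.single hedge))
      exact ⟨cval hk0 (t :: rest) (Sum.inl (fstV x)),
             cval hk0 (t :: rest) (Sum.inr (sndV x)),
             cval hk0 (t :: rest) (Sum.inr (sndV y)),
             val_eq x, by rw [val_eq y, hcv]⟩
    rw [List.map_cons, val_eq t] at hchain
    obtain ⟨z, hz⟩ := chain_foldl _ _ _ hchain
    have hLe := hL e
    rw [List.map_cons] at hLe
    have hnone : (rest.map (Sum.elim e (fun c => some c))).foldl (cmulI k)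
        (Sum.elim e (fun c => some c) t) = none := by
      simpa [prodWith] using hLe
    rw [val_eq t, hz] at hnone
    exact absurd hnone (by simp)
  · -- inconsistent component → identically zero
    rintro ⟨a, b, i, j, hij, ha, hb, hre⟩ e
    rw [List.map_cons]
    rcases hres : (rest.map (Sum.elim e (fun c => some c))).foldl (cmulI k)
        (Sum.elim e (fun c => some c) t) with _ | z
    · simp [prodWith, hres]
    · exfalso
      have hchain : List.Chain' (Mrel k)
          ((t :: rest).map (Sum.elim e (fun c => some c))) := by
        rw [List.map_cons]; exact foldl_chain _ _ z hres
      have hM : ∀ x y, consec (t :: rest) x y →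
          Mrel k (Sum.elim e (fun c => some c) x) (Sum.elim e (fun c => some c) y) :=
        fun x y hc => consec_of_chain' hchain hc
      have hedge : ∀ u w, edgeB (t :: rest) u w → phiV e u = phiV e w := by
        rintro u w ⟨x, y, hc, hor⟩
        obtain ⟨i0, l0, c0, hx, hy⟩ := hM x y hc
        have h1 : phiV e (Sum.inr (sndV x)) = some l0 := by
          rcases x with v | ⟨i', l'⟩
          · have hev : e v = some (i0, l0) := hx
            show (e v).map Prod.snd = some l0
            rw [hev]; rfl
          · have hpair : i' = i0 ∧ l' = l0 := by
              have h' : (some (i', l') : Option (Fin k × Fin k)) = some (i0, l0) := hx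
              simpa using h'
            show some l' = some l0
            rw [hpair.2]
        have h2 : phiV e (Sum.inl (fstV y)) = some l0 := by
          rcases y with v | ⟨i', l'⟩
          · have hev : e v = some (l0, c0) := hy
            show (e v).map Prod.fst = some l0
            rw [hev]; rfl
          · have hpair : i' = l0 ∧ l' = c0 := by
              have h' : (some (i', l') : Option (Fin k × Fin k)) = some (l0, c0) := hy
              simpa using h'
            show some i' = some l0
            rw [hpair.1]
        rcases hor with ⟨rfl, rfl⟩ | ⟨rfl, rfl⟩
        · rw [h1, h2]
        · rw [h1, h2]
      have hreachφ : ∀ {u w}, reachB (t :: rest) u w → phiV e u = phiV e w := by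
        intro u w h
        have h' : Relation.ReflTransGen (edgeB (t :: rest)) u w := h
        clear h
        induction h' with
        | refl => rfl
        | tail _ h2 ih => exact ih.trans (hedge _ _ h2)
      have hφa : phiV e a = some i := by
        rcases a with (v | i') | (v | i')
        · exact absurd ha (by simp [constVal])
        · have hii : i' = i := by simpa [constVal] using ha
          show some i' = some i
          rw [hii]
        · exact absurd ha (by simp [constVal])
        · have hii : i' = i := by simpa [constVal] using ha
          show some i' = some i
          rw [hii]
      have hφb : phiV e b = some j := by
        rcases b with (v | i') | (v | i')
        · exact absurd hb (by simp [constVal])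
        · have hii : i' = j := by simpa [constVal] using hb
          show some i' = some j
          rw [hii]
        · exact absurd hb (by simp [constVal])
        · have hii : i' = j := by simpa [constVal] using hb
          show some i' = some j
          rw [hii]
      have hsome : (some i : Option (Fin k)) = some j := by
        rw [← hφa, ← hφb]; exact hreachφ hre
      exact hij (by simpa using hsome)
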